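/- A k-uniform hypergraph G is connected if and only if its geometry connectivity β(G) equals 1, i.e., the nonnegative eigenvectors of the Laplacian tensor corresponding to eigenvalue 0 span a one-dimensional space. -/

import Mathlib

open Finset

/-- A `k`-uniform hypergraph on vertex set `Fin n`. -/
structure UniformHypergraph (n k : ℕ) where
  edges : Finset (Finset (Fin n))
  card_eq : ∀ e ∈ edges, e.card = k

namespace UniformHypergraph

variable {n k : ℕ}

/-- Degree of a vertex: the number of edges containing it. -/
def degree (G : UniformHypergraph n k) (i : Fin n) : ℕ :=
  (G.edges.filter (fun e => i ∈ e)).card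

/-- Maximum degree ∇ of the hypergraph. -/
def maxDegree (G : UniformHypergraph n k) : ℕ :=
  Finset.univ.sup G.degree

/-- The adjacency tensor: entry `1/(k-1)!` if the index tuple enumerates an edge. -/
noncomputable def adjTensor (G : UniformHypergraph n k) : (Fin k → Fin n) → ℝ :=
  fun f => if Finset.image f Finset.univ ∈ G.edges then 1 / (Nat.factorial (k - 1)) else 0

/-- The identity tensor `I`: 1 on the diagonal, 0 elsewhere. -/
noncomputable def idTensor (n k : ℕ) [NeZero k] : (Fin k → Fin n) → ℝ :=
  fun f => if ∀ j, f j = f 0 then 1 else 0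

/-- The degree (diagonal) tensor `D`. -/
noncomputable def degTensor (G : UniformHypergraph n k) [NeZero k] : (Fin k → Fin n) → ℝ :=
  fun f => if ∀ j, f j = f 0 then (G.degree (f 0) : ℝ) else 0

/-- The Laplacian tensor `L = D - A`. -/
noncomputable def lapTensor (G : UniformHypergraph n k) [NeZero k] : (Fin k → Fin n) → ℝ :=
  fun f => G.degTensor f - G.adjTensor f

end UniformHypergraph

/-- `(T x^{k-1})_i = ∑_{i₂,…,i_k} t_{i i₂ … i_k} x_{i₂} ⋯ x_{i_k}`. -/
noncomputable def tapply {ι : Type*} [Fintype ι] [DecidableEq ι] {k : ℕ} [NeZero k]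
    (T : (Fin k → ι) → ℝ) (x : ι → ℝ) : ι → ℝ :=
  fun i => ∑ g : Fin k → ι,
    if g 0 = i then T g * ∏ j ∈ Finset.univ.erase (0 : Fin k), x (g j) else 0

/-- `(λ, x)` is an eigenpair of `T` : `T x^{k-1} = λ x^{[k-1]}`, `x ≠ 0`. -/
def IsEigenpair {n k : ℕ} [NeZero k] (T : (Fin k → Fin n) → ℝ) (lam : ℝ)
    (x : Fin n → ℝ) : Prop :=
  x ≠ 0 ∧ tapply T x = fun i => lam * (x i) ^ (k - 1)

/-- Complex version of `T x^{k-1}` for a real tensor `T`. -/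
noncomputable def capply {n k : ℕ} [NeZero k] (T : (Fin k → Fin n) → ℝ) (x : Fin n → ℂ) : Fin n → ℂ :=
  fun i => ∑ g : Fin k → Fin n,
    if g 0 = i then (T g : ℂ) * ∏ j ∈ Finset.univ.erase (0 : Fin k), x (g j) else 0

/-- `lam` is a (complex) eigenvalue of the real tensor `T`. -/
def IsCEigenvalue {n k : ℕ} [NeZero k] (T : (Fin k → Fin n) → ℝ) (lam : ℂ) : Prop :=
  ∃ x : Fin n → ℂ, x ≠ 0 ∧ capply T x = fun i => lam * (x i) ^ (k - 1)

/-- The spectral radius: the maximum modulus of eigenvalues of `T`. -/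
noncomputable def specRad {n k : ℕ} [NeZero k] (T : (Fin k → Fin n) → ℝ) : ℝ :=
  sSup {r : ℝ | ∃ lam : ℂ, IsCEigenvalue T lam ∧ ‖lam‖ = r}

/-- Arc `(i,j)` of the directed graph associated with a nonnegative tensor. -/
def tensorArc {n k : ℕ} [NeZero k] (T : (Fin k → Fin n) → ℝ) (i j : Fin n) : Prop :=
  ∃ g : Fin k → Fin n, g 0 = i ∧ 0 < T g ∧ ∃ l : Fin k, l ≠ 0 ∧ g l = j

/-- A tensor is weakly irreducible if its associated digraph is strongly connected. -/
def WeaklyIrreducible {n k : ℕ} [NeZero k] (T : (Fin k → Fin n) → ℝ) : Prop :=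
  ∀ i j : Fin n, Relation.ReflTransGen (tensorArc T) i j

namespace UniformHypergraph

variable {n k : ℕ}

/-- Two vertices are adjacent if some edge contains both. -/
def adjRel (G : UniformHypergraph n k) (u v : Fin n) : Prop :=
  ∃ e ∈ G.edges, u ∈ e ∧ v ∈ e

/-- A hypergraph is connected if any two vertices are joined by a path. -/
def Connected (G : UniformHypergraph n k) : Prop :=
  ∀ u v : Fin n, Relation.ReflTransGen (G.adjRel) u v

/-- `V : Fin r → Finset (Fin n)` lists the connected components of `G`:
the `V j` are nonempty, partition the vertex set, and each `V j` is exactly a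
connectivity class. -/
def IsComponents (G : UniformHypergraph n k) {r : ℕ} (V : Fin r → Finset (Fin n)) : Prop :=
  (∀ i : Fin n, ∃! j : Fin r, i ∈ V j) ∧
  (∀ j : Fin r, (V j).Nonempty) ∧
  (∀ j : Fin r, ∀ u ∈ V j, ∀ v : Fin n,
    (v ∈ V j ↔ Relation.ReflTransGen (G.adjRel) u v))

end UniformHypergraph

/-- Principal subtensor of `T` indexed by the subset `S`. -/
noncomputable def subtensor {n k : ℕ} (T : (Fin k → Fin n) → ℝ) (S : Finset (Fin n)) :
    (Fin k → {i // i ∈ S}) → ℝ :=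
  fun f => T (fun j => (f j : Fin n))

/-- Restriction of a vector to the coordinates in `S`. -/
noncomputable def restrictVec {n : ℕ} (x : Fin n → ℝ) (S : Finset (Fin n)) : {i // i ∈ S} → ℝ :=
  fun i => x i

/-- Indicator vector of a subset. -/
noncomputable def indicator {n : ℕ} (S : Finset (Fin n)) : Fin n → ℝ :=
  fun j => if j ∈ S then 1 else 0

/-- `r` is the maximum number of linearly independent elements of `S`. -/
def maxLinIndep {V : Type*} [AddCommGroup V] [Module ℝ V] (S : Set V) (r : ℕ) : Prop :=
  (∃ v : Fin r → V, (∀ i, v i ∈ S) ∧ LinearIndependent ℝ v) ∧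
  (∀ (m : ℕ) (w : Fin m → V), (∀ i, w i ∈ S) → LinearIndependent ℝ w → m ≤ r)


section MyAux

open Finset

variable {n k : ℕ} [NeZero k]

lemma myaux_card_erase_zero : (Finset.univ.erase (0 : Fin k)).card = k - 1 := by
  rw [Finset.card_erase_of_mem (Finset.mem_univ _), Finset.card_univ, Fintype.card_fin]

lemma myaux_inj_of_image {g : Fin k → Fin n} {e : Finset (Fin n)}
    (hgi : Finset.image g Finset.univ = e) (hek : e.card = k) : Function.Injective g := by
  have h : Set.InjOn g (Finset.univ : Finset (Fin k)) := by
    apply Finset.injOn_of_card_image_eq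
    rw [hgi, hek, Finset.card_univ, Fintype.card_fin]
  exact fun a b hab => h (by simp) (by simp) hab

lemma myaux_card_enum (i : Fin n) (e : Finset (Fin n)) (hie : i ∈ e) (hek : e.card = k) :
    (Finset.univ.filter (fun g : Fin k → Fin n =>
        g 0 = i ∧ Finset.image g Finset.univ = e)).card = (k - 1).factorial := by
  classical
  have hcardA : Nat.card {x : Fin k // x ∈ Finset.univ.erase (0 : Fin k)} = k - 1 := by
    rw [Nat.card_eq_fintype_card, Fintype.card_coe, myaux_card_erase_zero]
  have hcardB : Nat.card {x : Fin n // x ∈ e.erase i} = k - 1 := by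
    rw [Nat.card_eq_fintype_card, Fintype.card_coe, Finset.card_erase_of_mem hie, hek]
  have key : Nat.card {g : Fin k → Fin n //
      g 0 = i ∧ Finset.image g Finset.univ = e} = (k - 1).factorial := by
    have E : {g : Fin k → Fin n // g 0 = i ∧ Finset.image g Finset.univ = e} ≃
        ({x : Fin k // x ∈ Finset.univ.erase (0 : Fin k)} ≃ {x : Fin n // x ∈ e.erase i}) := by
      refine
        { toFun := fun s => ?_
          invFun := fun σ => ?_
          left_inv := ?_
          right_inv := ?_ }
      · -- forward
        have hinj : Function.Injective s.1 := myaux_inj_of_image s.2.2 hek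
        refine Equiv.ofBijective (fun j => ⟨s.1 j.1, ?_⟩) ?_
        · rw [Finset.mem_erase]
          constructor
          · intro hji
            have hj0 : (j : Fin k) ≠ 0 := (Finset.mem_erase.mp j.2).1
            exact hj0 (hinj (hji.trans s.2.1.symm))
          · have h2 : s.1 j.1 ∈ Finset.image s.1 Finset.univ :=
              Finset.mem_image_of_mem _ (Finset.mem_univ _)
            rwa [s.2.2] at h2
        · rw [Fintype.bijective_iff_injective_and_card]
          constructor
          · intro a b hab
            apply Subtype.ext
            exact hinj (congrArg Subtype.val hab)
          · rw [← Nat.card_eq_fintype_card, ← Nat.card_eq_fintype_card]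
            exact hcardA.trans hcardB.symm
      · -- backward
        refine ⟨fun j => if h : j = 0 then i else
            (σ ⟨j, by simp [Finset.mem_erase, h]⟩ : Fin n), by simp, ?_⟩
        ext v
        simp only [Finset.mem_image, Finset.mem_univ, true_and]
        constructor
        · rintro ⟨j, rfl⟩
          by_cases h : j = 0
          · simpa [h] using hie
          · rw [dif_neg h]
            have h2 := (σ ⟨j, by simp [Finset.mem_erase, h]⟩).2
            exact Finset.mem_of_mem_erase h2
        · intro hv
          by_cases hvi : v = i
          · exact ⟨0, by simp [hvi]⟩
          · have hvB : v ∈ e.erase i := Finset.mem_erase.mpr ⟨hvi, hv⟩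
            refine ⟨(σ.symm ⟨v, hvB⟩ : Fin k), ?_⟩
            have h0 : ((σ.symm ⟨v, hvB⟩ : Fin k)) ≠ 0 :=
              (Finset.mem_erase.mp (σ.symm ⟨v, hvB⟩).2).1
            rw [dif_neg h0]
            have h3 : (⟨(σ.symm ⟨v, hvB⟩ : Fin k), by simp [Finset.mem_erase, h0]⟩ :
                {x : Fin k // x ∈ Finset.univ.erase (0 : Fin k)})
                = σ.symm ⟨v, hvB⟩ := Subtype.ext rfl
            rw [h3, Equiv.apply_symm_apply]
      · -- left inverse
        intro s
        apply Subtype.ext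
        funext j
        by_cases h : j = 0
        · simp only [h, dif_pos]
          exact s.2.1.symm
        · simp only [dif_neg h]
          rfl
      · -- right inverse
        intro σ
        apply Equiv.ext
        intro a
        have h0 : (a : Fin k) ≠ 0 := (Finset.mem_erase.mp a.2).1
        apply Subtype.ext
        show (if h : (a : Fin k) = 0 then i else (σ ⟨(a : Fin k), _⟩ : Fin n)) = (σ a : Fin n)
        rw [dif_neg h0]
    rw [Nat.card_eq_fintype_card, Fintype.card_congr E,
      Fintype.card_equiv (Fintype.equivOfCardEq (by
        rw [← Nat.card_eq_fintype_card, ← Nat.card_eq_fintype_card]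
        exact hcardA.trans hcardB.symm)),
      ← Nat.card_eq_fintype_card, hcardA]
  rw [← key, Nat.card_eq_fintype_card, Fintype.card_subtype]

lemma myaux_prod_enum (x : Fin n → ℝ) {i : Fin n} {e : Finset (Fin n)} (hek : e.card = k)
    {g : Fin k → Fin n} (hg0 : g 0 = i) (hgi : Finset.image g Finset.univ = e) :
    ∏ j ∈ Finset.univ.erase (0 : Fin k), x (g j) = ∏ v ∈ e.erase i, x v := by
  classical
  have hinj : Function.Injective g := myaux_inj_of_image hgi hek
  have himg : (Finset.univ.erase (0 : Fin k)).image g = e.erase i := by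
    rw [Finset.image_erase hinj, hgi, hg0]
  rw [← himg, Finset.prod_image (fun a _ b _ h => hinj h)]

lemma myaux_tapply_adj (G : UniformHypergraph n k) (x : Fin n → ℝ) (i : Fin n) :
    tapply G.adjTensor x i
      = ∑ e ∈ G.edges.filter (fun e => i ∈ e), ∏ v ∈ e.erase i, x v := by
  classical
  unfold tapply
  have step1 : ∀ g : Fin k → Fin n,
      (if g 0 = i then G.adjTensor g * ∏ j ∈ Finset.univ.erase (0 : Fin k), x (g j) else 0)
      = ∑ e ∈ G.edges.filter (fun e => i ∈ e),
          (if g 0 = i ∧ Finset.image g Finset.univ = e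
            then (1 / ((k-1).factorial : ℝ)) * ∏ j ∈ Finset.univ.erase (0 : Fin k), x (g j)
            else 0) := by
    intro g
    by_cases hg0 : g 0 = i
    · by_cases hge : Finset.image g Finset.univ ∈ G.edges
      · rw [if_pos hg0,
          Finset.sum_eq_single_of_mem (Finset.image g Finset.univ)
            (by
              rw [Finset.mem_filter]
              refine ⟨hge, ?_⟩
              rw [← hg0]
              exact Finset.mem_image_of_mem _ (Finset.mem_univ _))
            (by
              intro b _ hb
              rw [if_neg]
              rintro ⟨-, h⟩
              exact hb h.symm)]
        rw [if_pos ⟨hg0, rfl⟩]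
        unfold UniformHypergraph.adjTensor
        rw [if_pos hge]
      · rw [if_pos hg0]
        unfold UniformHypergraph.adjTensor
        rw [if_neg hge, zero_mul]
        symm
        apply Finset.sum_eq_zero
        intro b hb
        rw [if_neg]
        rintro ⟨-, h⟩
        rw [Finset.mem_filter] at hb
        exact hge (h ▸ hb.1)
    · rw [if_neg hg0]
      symm
      apply Finset.sum_eq_zero
      intro b _
      rw [if_neg]
      rintro ⟨h, -⟩
      exact hg0 h
  rw [Finset.sum_congr rfl (fun g _ => step1 g), Finset.sum_comm]
  apply Finset.sum_congr rfl
  intro e he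
  rw [Finset.mem_filter] at he
  have hek : e.card = k := G.card_eq e he.1
  rw [← Finset.sum_filter]
  have step2 : ∀ g ∈ Finset.univ.filter (fun g : Fin k → Fin n =>
      g 0 = i ∧ Finset.image g Finset.univ = e),
      (1 / ((k-1).factorial : ℝ)) * ∏ j ∈ Finset.univ.erase (0 : Fin k), x (g j)
        = (1 / ((k-1).factorial : ℝ)) * ∏ v ∈ e.erase i, x v := by
    intro g hg
    rw [Finset.mem_filter] at hg
    rw [myaux_prod_enum x hek hg.2.1 hg.2.2]
  rw [Finset.sum_congr rfl step2, Finset.sum_const, myaux_card_enum i e he.2 hek,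
    nsmul_eq_mul]
  have hf : ((k-1).factorial : ℝ) ≠ 0 := by
    exact_mod_cast (k-1).factorial_ne_zero
  field_simp

lemma myaux_tapply_deg (G : UniformHypergraph n k) (x : Fin n → ℝ) (i : Fin n) :
    tapply G.degTensor x i = (G.degree i : ℝ) * x i ^ (k - 1) := by
  classical
  unfold tapply
  rw [Finset.sum_eq_single_of_mem (fun _ : Fin k => i) (Finset.mem_univ _)]
  · rw [if_pos rfl]
    unfold UniformHypergraph.degTensor
    rw [if_pos (fun _ => rfl)]
    rw [Finset.prod_const, myaux_card_erase_zero]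
  · intro g _ hne
    by_cases hg0 : g 0 = i
    · rw [if_pos hg0]
      have hno : ¬ ∀ j, g j = g 0 := by
        intro h
        apply hne
        funext j
        rw [h j, hg0]
      unfold UniformHypergraph.degTensor
      rw [if_neg hno, zero_mul]
    · rw [if_neg hg0]

lemma myaux_tapply_lap (G : UniformHypergraph n k) (x : Fin n → ℝ) (i : Fin n) :
    tapply G.lapTensor x i
      = (G.degree i : ℝ) * x i ^ (k - 1)
        - ∑ e ∈ G.edges.filter (fun e => i ∈ e), ∏ v ∈ e.erase i, x v := by
  classical
  rw [← myaux_tapply_deg, ← myaux_tapply_adj]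
  unfold tapply
  rw [← Finset.sum_sub_distrib]
  apply Finset.sum_congr rfl
  intro g _
  show (if g 0 = i then (G.degTensor g - G.adjTensor g) * _ else 0) = _
  by_cases h : g 0 = i
  · rw [if_pos h, if_pos h, if_pos h]; ring
  · rw [if_neg h, if_neg h, if_neg h]; ring

lemma myaux_sol_iff (G : UniformHypergraph n k) (x : Fin n → ℝ) :
    tapply G.lapTensor x = 0 ↔ ∀ i, (G.degree i : ℝ) * x i ^ (k - 1)
      = ∑ e ∈ G.edges.filter (fun e => i ∈ e), ∏ v ∈ e.erase i, x v := by
  constructor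
  · intro h i
    have := congrFun h i
    rw [myaux_tapply_lap] at this
    have h2 : (0 : Fin n → ℝ) i = 0 := rfl
    rw [h2] at this
    linarith [this]
  · intro h
    funext i
    show tapply G.lapTensor x i = 0
    rw [myaux_tapply_lap, h i, sub_self]

lemma myaux_indicator_sol (hk : 2 ≤ k) (G : UniformHypergraph n k) (C : Finset (Fin n))
    (hC : ∀ e ∈ G.edges, (∀ j ∈ e, j ∈ C) ∨ (∀ j ∈ e, j ∉ C)) :
    tapply G.lapTensor (indicator C) = 0 := by
  classical
  rw [myaux_sol_iff]
  intro i
  by_cases hiC : i ∈ C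
  · have h1 : indicator C i = 1 := by simp [indicator, hiC]
    rw [h1, one_pow, mul_one]
    have h2 : ∀ e ∈ G.edges.filter (fun e => i ∈ e), ∏ v ∈ e.erase i, indicator C v = 1 := by
      intro e he
      rw [Finset.mem_filter] at he
      apply Finset.prod_eq_one
      intro v hv
      rcases hC e he.1 with h | h
      · simp [indicator, h v (Finset.mem_of_mem_erase hv)]
      · exact absurd hiC (h i he.2)
    rw [Finset.sum_congr rfl h2, Finset.sum_const, nsmul_eq_mul, mul_one]
    rfl
  · have h1 : indicator C i = 0 := by simp [indicator, hiC]
    rw [h1, zero_pow (by omega), mul_zero]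
    symm
    apply Finset.sum_eq_zero
    intro e he
    rw [Finset.mem_filter] at he
    have hek : e.card = k := G.card_eq e he.1
    have hne : (e.erase i).Nonempty := by
      rw [← Finset.card_pos, Finset.card_erase_of_mem he.2, hek]
      omega
    obtain ⟨w, hw⟩ := hne
    apply Finset.prod_eq_zero hw
    rcases hC e he.1 with h | h
    · exact absurd (h i he.2) hiC
    · simp [indicator, h w (Finset.mem_of_mem_erase hw)]

lemma myaux_prod_eq_pow_forall {ι : Type*} [DecidableEq ι] {s : Finset ι} {f : ι → ℝ}
    {M : ℝ} (hM : 0 < M) (h0 : ∀ v ∈ s, 0 ≤ f v) (h1 : ∀ v ∈ s, f v ≤ M)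
    (hp : ∏ v ∈ s, f v = M ^ s.card) : ∀ v ∈ s, f v = M := by
  intro v hv
  by_contra hne
  have hlt : f v < M := lt_of_le_of_ne (h1 v hv) hne
  have h2 : ∏ w ∈ s.erase v, f w ≤ M ^ (s.erase v).card := by
    rw [← Finset.prod_const]
    exact Finset.prod_le_prod (fun w hw => h0 w (Finset.mem_of_mem_erase hw))
      (fun w hw => h1 w (Finset.mem_of_mem_erase hw))
  have h3 : ∏ w ∈ s, f w < M ^ s.card := by
    rw [← Finset.mul_prod_erase s f hv]
    calc f v * ∏ w ∈ s.erase v, f w ≤ f v * M ^ (s.erase v).card := by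
          exact mul_le_mul_of_nonneg_left h2 (h0 v hv)
      _ < M * M ^ (s.erase v).card := mul_lt_mul_of_pos_right hlt (pow_pos hM _)
      _ = M ^ s.card := by
          rw [← pow_succ']
          congr 1
          have hpos : 0 < s.card := Finset.card_pos.mpr ⟨v, hv⟩
          rw [Finset.card_erase_of_mem hv]
          omega
  exact absurd hp (ne_of_lt h3)

lemma myaux_const_of_sol (hn : 0 < n) (G : UniformHypergraph n k) (hconn : G.Connected)
    {x : Fin n → ℝ} (hx0 : x ≠ 0) (hxn : ∀ i, 0 ≤ x i)
    (hsol : tapply G.lapTensor x = 0) : ∀ a b : Fin n, x a = x b := by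
  classical
  obtain ⟨i₀, -, hmax⟩ := Finset.exists_max_image Finset.univ x ⟨⟨0, hn⟩, Finset.mem_univ _⟩
  have hmax' : ∀ a, x a ≤ x i₀ := fun a => hmax a (Finset.mem_univ a)
  have hMpos : 0 < x i₀ := by
    obtain ⟨j, hj⟩ : ∃ j, x j ≠ 0 := by
      by_contra h
      push_neg at h
      exact hx0 (funext h)
    exact lt_of_lt_of_le (lt_of_le_of_ne (hxn j) (Ne.symm hj)) (hmax' j)
  have heq := (myaux_sol_iff G x).mp hsol
  have hstep : ∀ u c : Fin n, x u = x i₀ → G.adjRel u c → x c = x i₀ := by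
    intro u c hu hadj
    obtain ⟨e, he, hue, hce⟩ := hadj
    -- every term in the sum at u is at most (x i₀)^(k-1)
    have hbound : ∀ e' ∈ G.edges.filter (fun e => u ∈ e),
        ∏ v ∈ e'.erase u, x v ≤ x i₀ ^ (k - 1) := by
      intro e' he'
      rw [Finset.mem_filter] at he'
      have : ∏ v ∈ e'.erase u, x v ≤ ∏ _v ∈ e'.erase u, x i₀ :=
        Finset.prod_le_prod (fun v _ => hxn v) (fun v _ => hmax' v)
      rwa [Finset.prod_const, Finset.card_erase_of_mem he'.2, G.card_eq e' he'.1] at this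
    have hsum : ∑ e' ∈ G.edges.filter (fun e => u ∈ e),
        (x i₀ ^ (k - 1) - ∏ v ∈ e'.erase u, x v) = 0 := by
      rw [Finset.sum_sub_distrib, Finset.sum_const, nsmul_eq_mul]
      have hu' := heq u
      rw [hu] at hu'
      rw [← hu', UniformHypergraph.degree]
      ring
    have hall := (Finset.sum_eq_zero_iff_of_nonneg
      (fun e' he' => sub_nonneg.mpr (hbound e' he'))).mp hsum
    have hmemf : e ∈ G.edges.filter (fun e => u ∈ e) := Finset.mem_filter.mpr ⟨he, hue⟩
    have hprod : ∏ v ∈ e.erase u, x v = x i₀ ^ (e.erase u).card := by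
      have := hall e hmemf
      have h2 : ∏ v ∈ e.erase u, x v = x i₀ ^ (k - 1) := by linarith
      rw [h2, Finset.card_erase_of_mem hue, G.card_eq e he]
    by_cases hcu : c = u
    · rw [hcu, hu]
    · exact myaux_prod_eq_pow_forall hMpos (fun v _ => hxn v) (fun v _ => hmax' v)
        hprod c (Finset.mem_erase.mpr ⟨hcu, hce⟩)
  have key : ∀ b : Fin n, Relation.ReflTransGen G.adjRel i₀ b → x b = x i₀ := by
    intro b hb
    induction hb with
    | refl => rfl
    | tail _ hr ih => exact hstep _ _ ih hr
  intro a b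
  rw [key a (hconn i₀ a), key b (hconn i₀ b)]

lemma myaux_le_one_of_li_smul {m : ℕ} {o : Fin n → ℝ} (c : Fin m → ℝ)
    (hli : LinearIndependent ℝ (fun i => c i • o)) : m ≤ 1 := by
  by_contra h
  push_neg at h
  set a : Fin m := ⟨0, by omega⟩ with ha
  set b : Fin m := ⟨1, by omega⟩ with hb
  have hab : a ≠ b := by simp [ha, hb, Fin.ext_iff]
  have hca : c a ≠ 0 := by
    intro hc
    exact hli.ne_zero a (by rw [hc, zero_smul])
  have hcb : c b ≠ 0 := by
    intro hc
    exact hli.ne_zero b (by rw [hc, zero_smul])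
  have hsum : ∑ i : Fin m, (if i = a then c b else if i = b then -(c a) else 0) • (c i • o)
      = 0 := by
    have hterm : ∀ i : Fin m, (if i = a then c b else if i = b then -(c a) else 0) • (c i • o)
        = ((if i = a then c b * c a else 0) + (if i = b then -(c a * c b) else 0)) • o := by
      intro i
      by_cases h1 : i = a
      · subst h1
        rw [if_pos rfl, if_pos rfl, if_neg hab, add_zero, smul_smul]
      · by_cases h2 : i = b
        · subst h2
          rw [if_neg h1, if_neg h1, if_pos rfl, if_pos rfl, zero_add, smul_smul]
          ring_nf
        · rw [if_neg h1, if_neg h2, if_neg h1, if_neg h2, add_zero, zero_smul, zero_smul]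
    rw [Finset.sum_congr rfl (fun i _ => hterm i), ← Finset.sum_smul,
      Finset.sum_add_distrib, Finset.sum_ite_eq' Finset.univ a (fun _ => c b * c a),
      Finset.sum_ite_eq' Finset.univ b (fun _ => -(c a * c b)), if_pos (Finset.mem_univ a),
      if_pos (Finset.mem_univ b)]
    rw [show c b * c a + -(c a * c b) = 0 by ring, zero_smul]
  have := Fintype.linearIndependent_iff.mp hli
    (fun i => if i = a then c b else if i = b then -(c a) else 0) hsum a
  rw [if_pos rfl] at this
  exact hcb this

end MyAux

/-- `G` is connected iff its geometry connectivity is 1. -/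
theorem connected_iff_geometry_connectivity_one {n k : ℕ} [NeZero k] (hk : 2 ≤ k)
    (hn : 0 < n) (G : UniformHypergraph n k) :
    G.Connected ↔ maxLinIndep {x : Fin n → ℝ | x ≠ 0 ∧ (∀ i, 0 ≤ x i) ∧ tapply G.lapTensor x = 0} 1 := by
  classical
  constructor
  · intro hconn
    constructor
    · refine ⟨fun _ => indicator Finset.univ, fun _ => ⟨?_, ?_, ?_⟩, ?_⟩
      · intro h
        have := congrFun h ⟨0, hn⟩
        simp [indicator] at this
      · intro i
        simp [indicator]
      · exact myaux_indicator_sol hk G Finset.univ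
          (fun e _ => Or.inl (fun j _ => Finset.mem_univ j))
      · apply linearIndependent_unique_iff.mpr
        intro h
        have := congrFun h ⟨0, hn⟩
        simp [indicator] at this
    · intro m w hw hli
      have hconst : ∀ i, ∀ a b : Fin n, w i a = w i b := fun i =>
        myaux_const_of_sol hn G hconn (hw i).1 (hw i).2.1 (hw i).2.2
      have hwi : w = fun i => (w i ⟨0, hn⟩) • (fun _ : Fin n => (1 : ℝ)) := by
        funext i a
        show w i a = (w i ⟨0, hn⟩) * 1
        rw [mul_one]
        exact hconst i a ⟨0, hn⟩
      apply myaux_le_one_of_li_smul (fun i => w i ⟨0, hn⟩)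
      rw [← hwi]
      exact hli
  · intro hmax u v
    by_contra hnr
    set C : Finset (Fin n) := Finset.univ.filter
      (fun w => Relation.ReflTransGen G.adjRel u w) with hCdef
    have huC : u ∈ C := Finset.mem_filter.mpr ⟨Finset.mem_univ _, Relation.ReflTransGen.refl⟩
    have hvC : v ∉ C := by
      intro h
      exact hnr (Finset.mem_filter.mp h).2
    have hCdich : ∀ e ∈ G.edges, (∀ j ∈ e, j ∈ C) ∨ (∀ j ∈ e, j ∉ C) := by
      intro e he
      by_cases hex : ∃ j ∈ e, j ∈ C
      · obtain ⟨j, hj, hjC⟩ := hex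
        left
        intro j' hj'
        refine Finset.mem_filter.mpr ⟨Finset.mem_univ _, ?_⟩
        exact ((Finset.mem_filter.mp hjC).2).tail ⟨e, he, hj, hj'⟩
      · right
        push_neg at hex
        exact hex
    have hx1 : indicator C ≠ 0 ∧ (∀ i, 0 ≤ indicator C i) ∧
        tapply G.lapTensor (indicator C) = 0 := by
      refine ⟨?_, ?_, myaux_indicator_sol hk G C hCdich⟩
      · intro h
        have := congrFun h u
        simp [indicator, huC] at this
      · intro i
        simp only [indicator]
        split <;> norm_num
    have hx2 : indicator (Finset.univ : Finset (Fin n)) ≠ 0 ∧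
        (∀ i, 0 ≤ indicator (Finset.univ : Finset (Fin n)) i) ∧
        tapply G.lapTensor (indicator (Finset.univ : Finset (Fin n))) = 0 := by
      refine ⟨?_, ?_, myaux_indicator_sol hk G Finset.univ
          (fun e _ => Or.inl (fun j _ => Finset.mem_univ j))⟩
      · intro h
        have := congrFun h u
        simp [indicator] at this
      · intro i
        simp [indicator]
    have hli : LinearIndependent ℝ ![indicator C, indicator (Finset.univ : Finset (Fin n))] := by
      rw [Fintype.linearIndependent_iff]
      intro g hg
      have h1 := congrFun hg v
      have h2 := congrFun hg u
      rw [Fin.sum_univ_two] at h1 h2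
      simp only [Matrix.cons_val_zero, Matrix.cons_val_one, Matrix.head_cons,
        Pi.add_apply, Pi.smul_apply, smul_eq_mul, Pi.zero_apply] at h1 h2
      rw [show indicator C v = 0 by simp [indicator, hvC],
        show indicator (Finset.univ : Finset (Fin n)) v = 1 by simp [indicator]] at h1
      rw [show indicator C u = 1 by simp [indicator, huC],
        show indicator (Finset.univ : Finset (Fin n)) u = 1 by simp [indicator]] at h2
      have hg1 : g 1 = 0 := by linarith
      have hg0 : g 0 = 0 := by
        rw [hg1] at h2
        linarith
      intro i
      fin_cases i
      · exact hg0
      · exact hg1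
    have h2le := hmax.2 2 ![indicator C, indicator (Finset.univ : Finset (Fin n))]
      (fun i => by
        fin_cases i
        · exact hx1
        · exact hx2) hli
    omega
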